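/- arXiv:2001.07889 — 9 statements merged into one kernel-verified Lean document; each statement's English description precedes it below -/
import Mathlib

section
/- Let C, C' be cost matrices and V, V' ∈ ℝ^S. Then ‖f_C(V) − f_{C'}(V')‖∞ ≤ S · ‖(C − C')ᵀ‖∞ + γ · ‖V − V'‖∞, where ‖(C − C')ᵀ‖∞ = max_{a ∈ Fin A} ∑_{s ∈ Fin S} |C s a − C' s a| is the maximum absolute row sum of the transposed difference matrix. -/
open Metric

/-- The Bellman operator for a discounted MDP with transition kernel `P`,
discount factor `γ` and cost matrix `C`. -/
noncomputable def bellman (S A : ℕ) (P : Fin S → Fin S → Fin A → ℝ) (γ : ℝ)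
    (C : Fin S → Fin A → ℝ) (V : Fin S → ℝ) : Fin S → ℝ :=
  fun s => ⨅ a : Fin A, (C s a + γ * ∑ s' : Fin S, P s' s a * V s')

lemma abs_ciInf_sub_ciInf_le {A : Type*} [Finite A] [Nonempty A]
    (x y : A → ℝ) (b : ℝ) (h : ∀ a, |x a - y a| ≤ b) :
    |(⨅ a, x a) - ⨅ a, y a| ≤ b := by
  rw [abs_sub_le_iff]
  constructor
  · obtain ⟨a0, ha0⟩ := exists_eq_ciInf_of_finite (f := y)
    have h1 : (⨅ a, x a) ≤ x a0 := ciInf_le (Set.Finite.bddBelow (Set.finite_range x)) a0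
    have h2 : x a0 - y a0 ≤ b := (abs_le.mp (h a0)).2
    rw [← ha0]; linarith
  · obtain ⟨a0, ha0⟩ := exists_eq_ciInf_of_finite (f := x)
    have h1 : (⨅ a, y a) ≤ y a0 := ciInf_le (Set.Finite.bddBelow (Set.finite_range y)) a0
    have h2 : y a0 - x a0 ≤ b := by
      have := (abs_le.mp (h a0)).1; linarith
    rw [← ha0]; linarith

theorem bellman_lipschitz_bound (S A : ℕ) (hS : 0 < S) (hA : 0 < A)
    (P : Fin S → Fin S → Fin A → ℝ)
    (hP0 : ∀ s' s a, 0 ≤ P s' s a)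
    (hP1 : ∀ s a, ∑ s' : Fin S, P s' s a = 1)
    (γ : ℝ) (hγ : γ ∈ Set.Ioo (0 : ℝ) 1)
    (C C' : Fin S → Fin A → ℝ) (V V' : Fin S → ℝ) :
    ‖bellman S A P γ C V - bellman S A P γ C' V'‖ ≤
      (S : ℝ) * (⨆ a : Fin A, ∑ s : Fin S, |C s a - C' s a|) + γ * ‖V - V'‖ := by
  haveI : Nonempty (Fin A) := ⟨⟨0, hA⟩⟩
  haveI : Nonempty (Fin S) := ⟨⟨0, hS⟩⟩
  have hγ0 : 0 ≤ γ := le_of_lt hγ.1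
  set M := ⨆ a : Fin A, ∑ s : Fin S, |C s a - C' s a| with hM
  have hMb : BddAbove (Set.range fun a : Fin A => ∑ s : Fin S, |C s a - C' s a|) :=
    Set.Finite.bddAbove (Set.finite_range _)
  have hM0 : 0 ≤ M := by
    refine le_trans ?_ (le_ciSup hMb (Classical.arbitrary (Fin A)))
    exact Finset.sum_nonneg fun s _ => abs_nonneg _
  have hVnorm : ∀ s' : Fin S, |V s' - V' s'| ≤ ‖V - V'‖ := by
    intro s'
    have := norm_le_pi_norm (V - V') s'
    simpa [Real.norm_eq_abs] using this
  have hbound : 0 ≤ (S : ℝ) * M + γ * ‖V - V'‖ := by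
    have : (0:ℝ) ≤ (S:ℝ) * M := mul_nonneg (Nat.cast_nonneg _) hM0
    have := mul_nonneg hγ0 (norm_nonneg (V - V'))
    positivity
  rw [pi_norm_le_iff_of_nonneg hbound]
  intro s
  rw [Pi.sub_apply, Real.norm_eq_abs]
  unfold bellman
  apply abs_ciInf_sub_ciInf_le
  intro a
  have key : (C s a + γ * ∑ s' : Fin S, P s' s a * V s') -
      (C' s a + γ * ∑ s' : Fin S, P s' s a * V' s') =
      (C s a - C' s a) + γ * ∑ s' : Fin S, P s' s a * (V s' - V' s') := by
    have hs : ∑ s' : Fin S, P s' s a * (V s' - V' s') =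
        (∑ s' : Fin S, P s' s a * V s') - ∑ s' : Fin S, P s' s a * V' s' := by
      rw [← Finset.sum_sub_distrib]; congr 1; funext s'; ring
    rw [hs]; ring
  rw [key]
  refine le_trans (abs_add_le _ _) ?_
  have h1 : |C s a - C' s a| ≤ (S : ℝ) * M := by
    have hle : |C s a - C' s a| ≤ ∑ s' : Fin S, |C s' a - C' s' a| :=
      Finset.single_le_sum (f := fun s' => |C s' a - C' s' a|)
        (fun i _ => abs_nonneg _) (Finset.mem_univ s)
    have hle2 : ∑ s' : Fin S, |C s' a - C' s' a| ≤ M := le_ciSup hMb a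
    have hS1 : (1:ℝ) ≤ (S:ℝ) := by exact_mod_cast hS
    nlinarith
  have h2 : |γ * ∑ s' : Fin S, P s' s a * (V s' - V' s')| ≤ γ * ‖V - V'‖ := by
    rw [abs_mul, abs_of_nonneg hγ0]
    apply mul_le_mul_of_nonneg_left _ hγ0
    calc |∑ s' : Fin S, P s' s a * (V s' - V' s')|
        ≤ ∑ s' : Fin S, |P s' s a * (V s' - V' s')| := Finset.abs_sum_le_sum_abs _ _
      _ ≤ ∑ s' : Fin S, P s' s a * ‖V - V'‖ := by
          apply Finset.sum_le_sum
          intro i _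
          rw [abs_mul, abs_of_nonneg (hP0 i s a)]
          exact mul_le_mul_of_nonneg_left (hVnorm i) (hP0 i s a)
      _ = ‖V - V'‖ := by rw [← Finset.sum_mul, hP1 s a, one_mul]
  linarith
end

section
/- Let 𝒞 be a nonempty bounded set of cost matrices, 𝒱 a nonempty bounded subset of ℝ^S, and D ≥ 0 a constant such that ‖(C − C')ᵀ‖∞ ≤ D for all C, C' ∈ 𝒞 (where ‖Mᵀ‖∞ = max_{a} ∑_{s} |M s a|). Then the diameter (with respect to the sup norm) of the set ⋃_{C ∈ 𝒞, V ∈ 𝒱} {f_C V} is at most S · D + γ · diam(𝒱), where diam denotes the metric diameter with respect to the sup norm. -/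
open Metric

lemma ciInf_sub_ciInf_le_of_forall {A : ℕ} (hA : 0 < A) (x y : Fin A → ℝ) (M : ℝ)
    (h : ∀ a, x a ≤ y a + M) : (⨅ a, x a) ≤ (⨅ a, y a) + M := by
  haveI : Nonempty (Fin A) := ⟨⟨0, hA⟩⟩
  rw [← sub_le_iff_le_add]
  refine le_ciInf fun a => ?_
  rw [sub_le_iff_le_add]
  exact le_trans (ciInf_le (Set.Finite.bddBelow (Set.finite_range x)) a) (h a)

theorem diam_bellman_image_le (S A : ℕ) (hS : 0 < S) (hA : 0 < A)
    (P : Fin S → Fin S → Fin A → ℝ)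
    (hP0 : ∀ s' s a, 0 ≤ P s' s a)
    (hP1 : ∀ s a, ∑ s' : Fin S, P s' s a = 1)
    (γ : ℝ) (hγ : γ ∈ Set.Ioo (0 : ℝ) 1)
    (𝒞 : Set (Fin S → Fin A → ℝ)) (h𝒞ne : 𝒞.Nonempty) (h𝒞b : Bornology.IsBounded 𝒞)
    (𝒱 : Set (Fin S → ℝ)) (h𝒱ne : 𝒱.Nonempty) (h𝒱b : Bornology.IsBounded 𝒱)
    (D : ℝ) (hD : 0 ≤ D)
    (hCD : ∀ C ∈ 𝒞, ∀ C' ∈ 𝒞, (⨆ a : Fin A, ∑ s : Fin S, |C s a - C' s a|) ≤ D) :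
    Metric.diam (⋃ C ∈ 𝒞, ⋃ V ∈ 𝒱, {bellman S A P γ C V}) ≤
      (S : ℝ) * D + γ * Metric.diam 𝒱 := by
  have hγ0 : 0 ≤ γ := le_of_lt hγ.1
  have hbound : (0:ℝ) ≤ (S : ℝ) * D + γ * Metric.diam 𝒱 := by
    have : (0:ℝ) ≤ (S:ℝ) * D := mul_nonneg (Nat.cast_nonneg _) hD
    nlinarith [Metric.diam_nonneg (s := 𝒱)]
  refine Metric.diam_le_of_forall_dist_le hbound ?_
  rintro x hx y hy
  simp only [Set.mem_iUnion, Set.mem_singleton_iff] at hx hy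
  obtain ⟨C, hC, V, hV, rfl⟩ := hx
  obtain ⟨C', hC', V', hV', rfl⟩ := hy
  -- key pointwise bound: |C s a - C' s a| ≤ D
  have hCab : ∀ s a, |C s a - C' s a| ≤ D := by
    intro s a
    have h1 : |C s a - C' s a| ≤ ∑ s' : Fin S, |C s' a - C' s' a| :=
      Finset.single_le_sum (f := fun s' => |C s' a - C' s' a|)
        (fun i _ => abs_nonneg _) (Finset.mem_univ s)
    have h2 : (∑ s' : Fin S, |C s' a - C' s' a|) ≤
        ⨆ a : Fin A, ∑ s' : Fin S, |C s' a - C' s' a| :=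
      le_ciSup (f := fun a : Fin A => ∑ s' : Fin S, |C s' a - C' s' a|)
        (Set.Finite.bddAbove (Set.finite_range _)) a
    exact h1.trans (h2.trans (hCD C hC C' hC'))
  have hVd : ∀ s', |V s' - V' s'| ≤ dist V V' := by
    intro s'
    have := dist_le_pi_dist V V' s'
    rwa [Real.dist_eq] at this
  -- per (s,a) bound
  have hM : ∀ s a,
      |(C s a + γ * ∑ s' : Fin S, P s' s a * V s') -
        (C' s a + γ * ∑ s' : Fin S, P s' s a * V' s')| ≤ D + γ * dist V V' := by
    intro s a
    have hsum : |(∑ s' : Fin S, P s' s a * V s') - ∑ s' : Fin S, P s' s a * V' s'|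
        ≤ dist V V' := by
      rw [← Finset.sum_sub_distrib]
      calc |∑ s' : Fin S, (P s' s a * V s' - P s' s a * V' s')|
          ≤ ∑ s' : Fin S, |P s' s a * V s' - P s' s a * V' s'| :=
            Finset.abs_sum_le_sum_abs _ _
        _ ≤ ∑ s' : Fin S, P s' s a * dist V V' := by
            refine Finset.sum_le_sum fun s' _ => ?_
            rw [← mul_sub, abs_mul, abs_of_nonneg (hP0 s' s a)]
            exact mul_le_mul_of_nonneg_left (hVd s') (hP0 s' s a)
        _ = dist V V' := by rw [← Finset.sum_mul, hP1 s a, one_mul]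
    calc |(C s a + γ * ∑ s' : Fin S, P s' s a * V s') -
          (C' s a + γ * ∑ s' : Fin S, P s' s a * V' s')|
        = |(C s a - C' s a) + γ * ((∑ s' : Fin S, P s' s a * V s') -
            ∑ s' : Fin S, P s' s a * V' s')| := by ring_nf
      _ ≤ |C s a - C' s a| + |γ * ((∑ s' : Fin S, P s' s a * V s') -
            ∑ s' : Fin S, P s' s a * V' s')| := abs_add_le _ _
      _ ≤ D + γ * dist V V' := by
          rw [abs_mul, abs_of_nonneg hγ0]
          exact add_le_add (hCab s a) (mul_le_mul_of_nonneg_left hsum hγ0)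
  -- coordinatewise infimum bound
  have hcoord : ∀ s, dist (bellman S A P γ C V s) (bellman S A P γ C' V' s)
      ≤ D + γ * dist V V' := by
    intro s
    have key1 : bellman S A P γ C V s ≤ bellman S A P γ C' V' s + (D + γ * dist V V') := by
      simp only [bellman]
      apply ciInf_sub_ciInf_le_of_forall hA
      intro a
      have h := (abs_le.mp (hM s a)).2
      linarith
    have key2 : bellman S A P γ C' V' s ≤ bellman S A P γ C V s + (D + γ * dist V V') := by
      simp only [bellman]
      apply ciInf_sub_ciInf_le_of_forall hA
      intro a
      have h := (abs_le.mp (hM s a)).1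
      linarith
    rw [Real.dist_eq, abs_sub_le_iff]
    exact ⟨by linarith, by linarith⟩
  have hdist : dist (bellman S A P γ C V) (bellman S A P γ C' V') ≤ D + γ * dist V V' := by
    refine (dist_pi_le_iff ?_).2 hcoord
    have : (0:ℝ) ≤ γ * dist V V' := mul_nonneg hγ0 dist_nonneg
    linarith
  refine hdist.trans ?_
  have h1 : D ≤ (S:ℝ) * D := by
    have : (1:ℝ) ≤ (S:ℝ) := by exact_mod_cast hS
    nlinarith
  have h2 : dist V V' ≤ Metric.diam 𝒱 := Metric.dist_le_diam_of_mem h𝒱b hV hV'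
  nlinarith
end

section
/- (Proposition 4) If 𝒞 is a nonempty compact set of cost matrices and 𝒱 is a nonempty compact subset of ℝ^S, then F_𝒞(𝒱) = closure(⋃_{C ∈ 𝒞, V ∈ 𝒱} {f_C V}) is a nonempty compact subset of ℝ^S. -/
open Metric

/-- The set-based Bellman operator associated with a set `𝒞` of cost matrices. -/
noncomputable def setBellman (S A : ℕ) (P : Fin S → Fin S → Fin A → ℝ) (γ : ℝ)
    (𝒞 : Set (Fin S → Fin A → ℝ)) (𝒱 : Set (Fin S → ℝ)) : Set (Fin S → ℝ) :=
  closure (⋃ C ∈ 𝒞, ⋃ V ∈ 𝒱, {bellman S A P γ C V})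

theorem setBellman_nonempty_compact (S A : ℕ) (hS : 0 < S) (hA : 0 < A)
    (P : Fin S → Fin S → Fin A → ℝ)
    (hP0 : ∀ s' s a, 0 ≤ P s' s a)
    (hP1 : ∀ s a, ∑ s' : Fin S, P s' s a = 1)
    (γ : ℝ) (hγ : γ ∈ Set.Ioo (0 : ℝ) 1)
    (𝒞 : Set (Fin S → Fin A → ℝ)) (h𝒞ne : 𝒞.Nonempty) (h𝒞c : IsCompact 𝒞)
    (𝒱 : Set (Fin S → ℝ)) (h𝒱ne : 𝒱.Nonempty) (h𝒱c : IsCompact 𝒱) :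
    (setBellman S A P γ 𝒞 𝒱).Nonempty ∧ IsCompact (setBellman S A P γ 𝒞 𝒱) := by
  haveI : Nonempty (Fin A) := ⟨⟨0, hA⟩⟩
  set g : (Fin S → Fin A → ℝ) × (Fin S → ℝ) → (Fin S → ℝ) :=
    fun p => bellman S A P γ p.1 p.2 with hg
  have hgcont : Continuous g := by
    apply continuous_pi
    intro s
    have : (fun p => g p s) = fun p : (Fin S → Fin A → ℝ) × (Fin S → ℝ) =>
        Finset.univ.inf' Finset.univ_nonempty
          (fun a => p.1 s a + γ * ∑ s' : Fin S, P s' s a * p.2 s') := by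
      funext p
      simp [hg, bellman, Finset.inf'_univ_eq_ciInf]
    rw [this]
    apply Continuous.finset_inf'_apply Finset.univ_nonempty
    intro a _
    exact ((continuous_apply_apply s a).comp continuous_fst).add
      (continuous_const.mul (continuous_finset_sum _ fun s' _ =>
        continuous_const.mul ((continuous_apply s').comp continuous_snd)))
  have himg : (⋃ C ∈ 𝒞, ⋃ V ∈ 𝒱, {bellman S A P γ C V}) = g '' (𝒞 ×ˢ 𝒱) := by
    ext x
    simp only [Set.mem_iUnion, Set.mem_singleton_iff, Set.mem_image, Set.mem_prod, Prod.exists]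
    constructor
    · rintro ⟨C, hC, V, hV, rfl⟩; exact ⟨C, V, ⟨hC, hV⟩, rfl⟩
    · rintro ⟨C, V, ⟨hC, hV⟩, rfl⟩; exact ⟨C, hC, V, hV, rfl⟩
  have hcomp : IsCompact (g '' (𝒞 ×ˢ 𝒱)) := (h𝒞c.prod h𝒱c).image hgcont
  have hclosed : IsClosed (g '' (𝒞 ×ˢ 𝒱)) := hcomp.isClosed
  have hset : setBellman S A P γ 𝒞 𝒱 = g '' (𝒞 ×ˢ 𝒱) := by
    rw [setBellman, himg, hclosed.closure_eq]
  rw [hset]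
  exact ⟨(Set.Nonempty.prod h𝒞ne h𝒱ne).image g, hcomp⟩
end

section
/- (Proposition 5, contraction) Let 𝒞 be a nonempty compact set of cost matrices and let 𝒱, 𝒱' be nonempty compact subsets of ℝ^S. Then the Hausdorff distance satisfies d_H(F_𝒞(𝒱), F_𝒞(𝒱')) ≤ γ · d_H(𝒱, 𝒱'). -/
open Metric

lemma ciInf_dist_le {ι : Type*} [Nonempty ι] [Finite ι] {f g : ι → ℝ} {r : ℝ}
    (h : ∀ i, dist (f i) (g i) ≤ r) : dist (⨅ i, f i) (⨅ i, g i) ≤ r := by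
  have key : ∀ (f g : ι → ℝ), (∀ i, f i ≤ g i + r) → (⨅ i, f i) ≤ (⨅ i, g i) + r := by
    intro f g h
    rw [← sub_le_iff_le_add]
    exact le_ciInf fun i => sub_le_iff_le_add.mpr ((ciInf_le (Finite.bddBelow_range f) i).trans (h i))
  rw [Real.dist_eq, abs_sub_le_iff]
  constructor
  · have := key f g fun i => by
      have := h i; rw [Real.dist_eq, abs_sub_le_iff] at this; linarith [this.1]
    linarith
  · have := key g f fun i => by
      have := h i; rw [Real.dist_eq, abs_sub_le_iff] at this; linarith [this.2]
    linarith

lemma bellman_lip (S A : ℕ) (hA : 0 < A) (P : Fin S → Fin S → Fin A → ℝ)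
    (hP0 : ∀ s' s a, 0 ≤ P s' s a) (hP1 : ∀ s a, ∑ s' : Fin S, P s' s a = 1)
    (γ : ℝ) (hγ0 : 0 ≤ γ) (C : Fin S → Fin A → ℝ) (V V' : Fin S → ℝ) :
    dist (bellman S A P γ C V) (bellman S A P γ C V') ≤ γ * dist V V' := by
  have hr : 0 ≤ γ * dist V V' := mul_nonneg hγ0 dist_nonneg
  rw [dist_pi_le_iff hr]
  intro s
  haveI : Nonempty (Fin A) := ⟨⟨0, hA⟩⟩
  apply ciInf_dist_le
  intro a
  rw [Real.dist_eq]
  have : (C s a + γ * ∑ s' : Fin S, P s' s a * V s') -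
      (C s a + γ * ∑ s' : Fin S, P s' s a * V' s')
      = γ * ∑ s' : Fin S, P s' s a * (V s' - V' s') := by
    simp only [Finset.mul_sum, mul_sub, Finset.sum_sub_distrib]
    ring
  rw [this, abs_mul, abs_of_nonneg hγ0]
  apply mul_le_mul_of_nonneg_left _ hγ0
  calc |∑ s' : Fin S, P s' s a * (V s' - V' s')| ≤ ∑ s' : Fin S, |P s' s a * (V s' - V' s')| :=
        Finset.abs_sum_le_sum_abs _ _
    _ ≤ ∑ s' : Fin S, P s' s a * dist V V' := by
        apply Finset.sum_le_sum
        intro s' _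
        rw [abs_mul, abs_of_nonneg (hP0 s' s a)]
        exact mul_le_mul_of_nonneg_left ((Real.dist_eq _ _ ▸ dist_le_pi_dist V V' s')) (hP0 s' s a)
    _ = dist V V' := by rw [← Finset.sum_mul, hP1, one_mul]


theorem setBellman_contraction (S A : ℕ) (hS : 0 < S) (hA : 0 < A)
    (P : Fin S → Fin S → Fin A → ℝ)
    (hP0 : ∀ s' s a, 0 ≤ P s' s a)
    (hP1 : ∀ s a, ∑ s' : Fin S, P s' s a = 1)
    (γ : ℝ) (hγ : γ ∈ Set.Ioo (0 : ℝ) 1)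
    (𝒞 : Set (Fin S → Fin A → ℝ)) (h𝒞ne : 𝒞.Nonempty) (h𝒞c : IsCompact 𝒞)
    (𝒱 𝒱' : Set (Fin S → ℝ)) (h𝒱ne : 𝒱.Nonempty) (h𝒱c : IsCompact 𝒱)
    (h𝒱'ne : 𝒱'.Nonempty) (h𝒱'c : IsCompact 𝒱') :
    hausdorffDist (setBellman S A P γ 𝒞 𝒱) (setBellman S A P γ 𝒞 𝒱') ≤
      γ * hausdorffDist 𝒱 𝒱' := by
  have hγ0 : 0 ≤ γ := le_of_lt hγ.1
  have hr : 0 ≤ γ * hausdorffDist 𝒱 𝒱' := mul_nonneg hγ0 hausdorffDist_nonneg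
  have hedist : EMetric.hausdorffEdist 𝒱 𝒱' ≠ ⊤ :=
    hausdorffEdist_ne_top_of_nonempty_of_bounded h𝒱ne h𝒱'ne h𝒱c.isBounded h𝒱'c.isBounded
  unfold setBellman
  rw [hausdorffDist_closure]
  apply hausdorffDist_le_of_infDist hr
  · intro x hx
    simp only [Set.mem_iUnion, Set.mem_singleton_iff] at hx
    obtain ⟨C, hC, V, hV, rfl⟩ := hx
    obtain ⟨V', hV', hVd⟩ := h𝒱'c.exists_infDist_eq_dist h𝒱'ne V
    have h1 : dist V V' ≤ hausdorffDist 𝒱 𝒱' := by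
      rw [← hVd]; exact infDist_le_hausdorffDist_of_mem hV hedist
    have hmem : bellman S A P γ C V' ∈ ⋃ C ∈ 𝒞, ⋃ V ∈ 𝒱', {bellman S A P γ C V} := by
      simp only [Set.mem_iUnion, Set.mem_singleton_iff]
      exact ⟨C, hC, V', hV', rfl⟩
    calc infDist (bellman S A P γ C V) (⋃ C ∈ 𝒞, ⋃ V ∈ 𝒱', {bellman S A P γ C V})
        ≤ dist (bellman S A P γ C V) (bellman S A P γ C V') := infDist_le_dist_of_mem hmem
      _ ≤ γ * dist V V' := bellman_lip S A hA P hP0 hP1 γ hγ0 C V V'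
      _ ≤ γ * hausdorffDist 𝒱 𝒱' := mul_le_mul_of_nonneg_left h1 hγ0
  · intro x hx
    simp only [Set.mem_iUnion, Set.mem_singleton_iff] at hx
    obtain ⟨C, hC, V, hV, rfl⟩ := hx
    obtain ⟨V', hV', hVd⟩ := h𝒱c.exists_infDist_eq_dist h𝒱ne V
    have h1 : dist V V' ≤ hausdorffDist 𝒱 𝒱' := by
      rw [← hVd, hausdorffDist_comm]
      exact infDist_le_hausdorffDist_of_mem hV (by rwa [EMetric.hausdorffEdist_comm])
    have hmem : bellman S A P γ C V' ∈ ⋃ C ∈ 𝒞, ⋃ V ∈ 𝒱, {bellman S A P γ C V} := by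
      simp only [Set.mem_iUnion, Set.mem_singleton_iff]
      exact ⟨C, hC, V', hV', rfl⟩
    calc infDist (bellman S A P γ C V) (⋃ C ∈ 𝒞, ⋃ V ∈ 𝒱, {bellman S A P γ C V})
        ≤ dist (bellman S A P γ C V) (bellman S A P γ C V') := infDist_le_dist_of_mem hmem
      _ ≤ γ * dist V V' := bellman_lip S A hA P hP0 hP1 γ hγ0 C V V'
      _ ≤ γ * hausdorffDist 𝒱 𝒱' := mul_le_mul_of_nonneg_left h1 hγ0
end

section
/- (Proposition 7) Let 𝒞 be a nonempty compact set of cost matrices and let 𝒱* be the unique nonempty compact set with F_𝒞(𝒱*) = 𝒱*. Let {C^k}_{k ∈ ℕ} be any sequence with C^k ∈ 𝒞 for every k, let V⁰ ∈ ℝ^S, and define V^{k+1} = f_{C^k}(V^k). Then the distance from V^k to the set 𝒱* tends to zero: inf_{V ∈ 𝒱*} ‖V^k − V‖∞ → 0 as k → ∞. -/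
open Metric

lemma iInf_abs_sub_le' {A : ℕ} (hA : 0 < A) (f g : Fin A → ℝ) (c : ℝ)
    (h : ∀ a, |f a - g a| ≤ c) : |(⨅ a, f a) - ⨅ a, g a| ≤ c := by
  haveI : Nonempty (Fin A) := Fin.pos_iff_nonempty.mp hA
  have key : ∀ (f g : Fin A → ℝ), (∀ a, |f a - g a| ≤ c) → (⨅ a, f a) - (⨅ a, g a) ≤ c := by
    intro f g h
    obtain ⟨a0, ha0⟩ := Finite.exists_min g
    have h1 : (⨅ a, f a) ≤ f a0 := ciInf_le (Finite.bddBelow_range f) a0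
    have h2 : g a0 ≤ ⨅ a, g a := le_ciInf ha0
    have h3 := abs_le.mp (h a0)
    linarith [h3.1, h3.2]
  rw [abs_sub_le_iff]
  exact ⟨key f g h, key g f (fun a => by rw [abs_sub_comm]; exact h a)⟩

lemma bellman_contract (S A : ℕ) (hS : 0 < S) (hA : 0 < A)
    (P : Fin S → Fin S → Fin A → ℝ)
    (hP0 : ∀ s' s a, 0 ≤ P s' s a)
    (hP1 : ∀ s a, ∑ s' : Fin S, P s' s a = 1)
    (γ : ℝ) (hγ0 : 0 ≤ γ) (C : Fin S → Fin A → ℝ) (V₁ V₂ : Fin S → ℝ) :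
    dist (bellman S A P γ C V₁) (bellman S A P γ C V₂) ≤ γ * dist V₁ V₂ := by
  haveI : Nonempty (Fin S) := Fin.pos_iff_nonempty.mp hS
  rw [dist_pi_le_iff (by positivity)]
  intro s
  rw [Real.dist_eq]
  apply iInf_abs_sub_le' hA
  intro a
  have : (C s a + γ * ∑ s' : Fin S, P s' s a * V₁ s')
      - (C s a + γ * ∑ s' : Fin S, P s' s a * V₂ s')
      = γ * ∑ s' : Fin S, P s' s a * (V₁ s' - V₂ s') := by
    rw [Finset.mul_sum]
    simp [mul_sub, Finset.sum_sub_distrib, mul_add, Finset.mul_sum]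
  rw [this, abs_mul, abs_of_nonneg hγ0]
  apply mul_le_mul_of_nonneg_left _ hγ0
  calc |∑ s' : Fin S, P s' s a * (V₁ s' - V₂ s')|
      ≤ ∑ s' : Fin S, |P s' s a * (V₁ s' - V₂ s')| := Finset.abs_sum_le_sum_abs _ _
    _ ≤ ∑ s' : Fin S, P s' s a * dist V₁ V₂ := by
        apply Finset.sum_le_sum
        intro s' _
        rw [abs_mul, abs_of_nonneg (hP0 s' s a)]
        apply mul_le_mul_of_nonneg_left _ (hP0 s' s a)
        rw [← Real.dist_eq]
        exact dist_le_pi_dist V₁ V₂ s'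
    _ = dist V₁ V₂ := by rw [← Finset.sum_mul, hP1, one_mul]

theorem value_iteration_tendsto_fixed_point_set (S A : ℕ) (hS : 0 < S) (hA : 0 < A)
    (P : Fin S → Fin S → Fin A → ℝ)
    (hP0 : ∀ s' s a, 0 ≤ P s' s a)
    (hP1 : ∀ s a, ∑ s' : Fin S, P s' s a = 1)
    (γ : ℝ) (hγ : γ ∈ Set.Ioo (0 : ℝ) 1)
    (𝒞 : Set (Fin S → Fin A → ℝ)) (h𝒞ne : 𝒞.Nonempty) (h𝒞c : IsCompact 𝒞)
    (Vstar : Set (Fin S → ℝ)) (hVne : Vstar.Nonempty) (hVc : IsCompact Vstar)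
    (hVfix : setBellman S A P γ 𝒞 Vstar = Vstar)
    (Cseq : ℕ → (Fin S → Fin A → ℝ)) (hCseq : ∀ k, Cseq k ∈ 𝒞)
    (V : ℕ → (Fin S → ℝ))
    (hV : ∀ k, V (k + 1) = bellman S A P γ (Cseq k) (V k)) :
    Filter.Tendsto (fun k => Metric.infDist (V k) Vstar) Filter.atTop (nhds 0) := by
  obtain ⟨hγ0, hγ1⟩ := hγ
  -- one-step contraction of the distance to Vstar
  have step : ∀ k, infDist (V (k + 1)) Vstar ≤ γ * infDist (V k) Vstar := by
    intro k
    obtain ⟨W, hW, hWd⟩ := hVc.exists_infDist_eq_dist hVne (V k)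
    have hmem : bellman S A P γ (Cseq k) W ∈ Vstar := by
      rw [← hVfix]
      apply subset_closure
      exact Set.mem_biUnion (hCseq k) (Set.mem_biUnion hW rfl)
    calc infDist (V (k + 1)) Vstar ≤ dist (V (k + 1)) (bellman S A P γ (Cseq k) W) :=
          infDist_le_dist_of_mem hmem
      _ ≤ γ * dist (V k) W := by
          rw [hV k]
          exact bellman_contract S A hS hA P hP0 hP1 γ hγ0.le (Cseq k) (V k) W
      _ = γ * infDist (V k) Vstar := by rw [← hWd]
  have bound : ∀ k, infDist (V k) Vstar ≤ γ ^ k * infDist (V 0) Vstar := by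
    intro k
    induction k with
    | zero => simp
    | succ n ih =>
        calc infDist (V (n + 1)) Vstar ≤ γ * infDist (V n) Vstar := step n
          _ ≤ γ * (γ ^ n * infDist (V 0) Vstar) :=
              mul_le_mul_of_nonneg_left ih hγ0.le
          _ = γ ^ (n + 1) * infDist (V 0) Vstar := by ring
  have hlim : Filter.Tendsto (fun k => γ ^ k * infDist (V 0) Vstar) Filter.atTop (nhds 0) := by
    have := tendsto_pow_atTop_nhds_zero_of_lt_one hγ0.le hγ1
    simpa using this.mul_const (infDist (V 0) Vstar)
  exact squeeze_zero (fun k => infDist_nonneg) bound hlim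
end

section
/- (Theorem 9) In a two-player single-controller stochastic game, let 𝒞 be a nonempty compact set of player-one cost matrices such that C¹(π₂*) ∈ 𝒞 for every Nash equilibrium (π₁*, π₂*), and let 𝒱* be the unique nonempty compact fixed point set of F_𝒞. Then for every Nash equilibrium (π₁*, π₂*), player one's stationary value function V(π₁*, π₂*) satisfies f_{C¹(π₂*)}(V(π₁*, π₂*)) = V(π₁*, π₂*) and consequently V(π₁*, π₂*) ∈ 𝒱*. -/
open Metric

/-- A (stationary, possibly mixed) policy: a probability distribution over actions at
each state. -/
def IsPolicy {S A : ℕ} (π : Fin S → Fin A → ℝ) : Prop :=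
  (∀ s a, 0 ≤ π s a) ∧ ∀ s, ∑ a : Fin A, π s a = 1

/-- Player one's induced cost matrix in a two-player game when player two plays `π₂`. -/
noncomputable def playerOneCost {S A₁ A₂ : ℕ} (D1 : Fin S → Fin A₁ → Fin A₂ → ℝ)
    (π₂ : Fin S → Fin A₂ → ℝ) : Fin S → Fin A₁ → ℝ :=
  fun s a => ∑ b : Fin A₂, π₂ s b * D1 s a b

/-- Player two's induced cost in a single-controller game when player one plays `π₁`. -/
noncomputable def playerTwoCost {S A₁ A₂ : ℕ} (D2 : Fin S → Fin A₁ → Fin A₂ → ℝ)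
    (π₁ : Fin S → Fin A₁ → ℝ) : Fin S → Fin A₂ → ℝ :=
  fun s b => ∑ a : Fin A₁, π₁ s a * D2 s a b

/-- Player two's induced transition kernel (a Markov chain) in a single-controller game. -/
noncomputable def playerTwoKernel {S A₁ : ℕ} (P : Fin S → Fin S → Fin A₁ → ℝ)
    (π₁ : Fin S → Fin A₁ → ℝ) : Fin S → Fin S → ℝ :=
  fun s' s => ∑ a : Fin A₁, π₁ s a * P s' s a

/-- `V` is the stationary value function of player one under the joint policy `(π₁, π₂)`
in a single-controller game with kernel `P`, cost `D1` and discount `γ₁`. -/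
def IsStationaryValueOne {S A₁ A₂ : ℕ} (P : Fin S → Fin S → Fin A₁ → ℝ) (γ₁ : ℝ)
    (D1 : Fin S → Fin A₁ → Fin A₂ → ℝ) (π₁ : Fin S → Fin A₁ → ℝ)
    (π₂ : Fin S → Fin A₂ → ℝ) (V : Fin S → ℝ) : Prop :=
  ∀ s, V s = ∑ a : Fin A₁,
    π₁ s a * (playerOneCost D1 π₂ s a + γ₁ * ∑ s' : Fin S, P s' s a * V s')

/-- `W` is the stationary value function of player two under the joint policy `(π₁, π₂)`
in a single-controller game with kernel `P`, cost `D2` and discount `γ₂`. -/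
def IsStationaryValueTwo {S A₁ A₂ : ℕ} (P : Fin S → Fin S → Fin A₁ → ℝ) (γ₂ : ℝ)
    (D2 : Fin S → Fin A₁ → Fin A₂ → ℝ) (π₁ : Fin S → Fin A₁ → ℝ)
    (π₂ : Fin S → Fin A₂ → ℝ) (W : Fin S → ℝ) : Prop :=
  ∀ s, W s = (∑ b : Fin A₂, π₂ s b * playerTwoCost D2 π₁ s b) +
    γ₂ * ∑ s' : Fin S, playerTwoKernel P π₁ s' s * W s'

/-- `(π₁, π₂)` is a Nash equilibrium of the two-player single-controller stochastic game:
no player can improve their stationary value function by a unilateral policy change. -/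
def IsNash {S A₁ A₂ : ℕ} (P : Fin S → Fin S → Fin A₁ → ℝ) (γ₁ γ₂ : ℝ)
    (D1 D2 : Fin S → Fin A₁ → Fin A₂ → ℝ)
    (π₁ : Fin S → Fin A₁ → ℝ) (π₂ : Fin S → Fin A₂ → ℝ) : Prop :=
  IsPolicy π₁ ∧ IsPolicy π₂ ∧
  (∀ π₁' : Fin S → Fin A₁ → ℝ, IsPolicy π₁' →
    ∀ V V' : Fin S → ℝ, IsStationaryValueOne P γ₁ D1 π₁ π₂ V →
      IsStationaryValueOne P γ₁ D1 π₁' π₂ V' → V ≤ V') ∧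
  (∀ π₂' : Fin S → Fin A₂ → ℝ, IsPolicy π₂' →
    ∀ W W' : Fin S → ℝ, IsStationaryValueTwo P γ₂ D2 π₁ π₂ W →
      IsStationaryValueTwo P γ₂ D2 π₁ π₂' W' → W ≤ W')

lemma aux_inf_attained {A : ℕ} [Nonempty (Fin A)] (f : Fin A → ℝ) :
    ∃ a, (⨅ b, f b) = f a ∧ ∀ b, f a ≤ f b := by
  obtain ⟨a, ha⟩ := Finite.exists_min f
  exact ⟨a, le_antisymm (ciInf_le (Finite.bddBelow_range f) a) (le_ciInf ha), ha⟩

lemma aux_inf_abs_sub {A : ℕ} [Nonempty (Fin A)] (f g : Fin A → ℝ) {c : ℝ}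
    (h : ∀ a, |f a - g a| ≤ c) : |(⨅ a, f a) - ⨅ a, g a| ≤ c := by
  obtain ⟨af, haf, hafm⟩ := aux_inf_attained f
  obtain ⟨ag, hag, hagm⟩ := aux_inf_attained g
  rw [abs_sub_le_iff]
  constructor
  · have h1 : (⨅ a, f a) ≤ f ag := ciInf_le (Finite.bddBelow_range f) ag
    have h2 := (abs_sub_le_iff.mp (h ag)).1
    rw [hag]; linarith
  · have h1 : (⨅ a, g a) ≤ g af := ciInf_le (Finite.bddBelow_range g) af
    have h2 := (abs_sub_le_iff.mp (h af)).2
    rw [haf]; linarith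

lemma aux_kernel_bound {S : ℕ} (p : Fin S → ℝ) (hp0 : ∀ s', 0 ≤ p s')
    (hp1 : ∑ s' : Fin S, p s' = 1) (V W : Fin S → ℝ) :
    |(∑ s' : Fin S, p s' * V s') - ∑ s' : Fin S, p s' * W s'| ≤ dist V W := by
  rw [← Finset.sum_sub_distrib]
  calc |∑ s' : Fin S, (p s' * V s' - p s' * W s')|
      ≤ ∑ s' : Fin S, |p s' * V s' - p s' * W s'| := Finset.abs_sum_le_sum_abs _ _
    _ ≤ ∑ s' : Fin S, p s' * dist V W := by
        apply Finset.sum_le_sum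
        intro s' _
        rw [← mul_sub, abs_mul, abs_of_nonneg (hp0 s')]
        exact mul_le_mul_of_nonneg_left
          (by rw [← Real.dist_eq]; exact dist_le_pi_dist V W s') (hp0 s')
    _ = dist V W := by rw [← Finset.sum_mul, hp1, one_mul]

lemma aux_contracting {S : ℕ} {γ : ℝ} (hγ0 : 0 ≤ γ) (hγ1 : γ < 1)
    (T : (Fin S → ℝ) → (Fin S → ℝ))
    (hT : ∀ V W s, |T V s - T W s| ≤ γ * dist V W) :
    ContractingWith ⟨γ, hγ0⟩ T := by
  constructor
  · exact_mod_cast hγ1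
  · apply LipschitzWith.of_dist_le_mul
    intro V W
    show dist (T V) (T W) ≤ γ * dist V W
    rw [dist_pi_le_iff (mul_nonneg hγ0 dist_nonneg)]
    intro s
    rw [Real.dist_eq]
    exact hT V W s

theorem nash_value_mem_fixed_point_set (S A₁ A₂ : ℕ)
    (hS : 0 < S) (hA₁ : 0 < A₁) (hA₂ : 0 < A₂)
    (P : Fin S → Fin S → Fin A₁ → ℝ)
    (hP0 : ∀ s' s a, 0 ≤ P s' s a)
    (hP1 : ∀ s a, ∑ s' : Fin S, P s' s a = 1)
    (γ₁ γ₂ : ℝ) (hγ₁ : γ₁ ∈ Set.Ioo (0 : ℝ) 1) (hγ₂ : γ₂ ∈ Set.Ioo (0 : ℝ) 1)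
    (D1 D2 : Fin S → Fin A₁ → Fin A₂ → ℝ)
    (𝒞 : Set (Fin S → Fin A₁ → ℝ)) (h𝒞ne : 𝒞.Nonempty) (h𝒞c : IsCompact 𝒞)
    (h𝒞NE : ∀ π₁ π₂, IsNash P γ₁ γ₂ D1 D2 π₁ π₂ → playerOneCost D1 π₂ ∈ 𝒞)
    (Vstar : Set (Fin S → ℝ)) (hVne : Vstar.Nonempty) (hVc : IsCompact Vstar)
    (hVfix : setBellman S A₁ P γ₁ 𝒞 Vstar = Vstar) :
    ∀ π₁ π₂, IsNash P γ₁ γ₂ D1 D2 π₁ π₂ →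
      ∀ V : Fin S → ℝ, IsStationaryValueOne P γ₁ D1 π₁ π₂ V →
        bellman S A₁ P γ₁ (playerOneCost D1 π₂) V = V ∧ V ∈ Vstar := by
  intro π₁ π₂ hN V hV
  haveI : Nonempty (Fin S) := ⟨⟨0, hS⟩⟩
  haveI : Nonempty (Fin A₁) := ⟨⟨0, hA₁⟩⟩
  obtain ⟨hπ₁, hπ₂, hN1, hN2⟩ := hN
  set C : Fin S → Fin A₁ → ℝ := playerOneCost D1 π₂ with hCdef
  set Q : Fin S → Fin A₁ → ℝ :=
    fun s a => C s a + γ₁ * ∑ s' : Fin S, P s' s a * V s' with hQdef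
  -- greedy actions
  choose g hg hgmin using fun s => aux_inf_attained (Q s)
  -- greedy deterministic policy
  set π₁' : Fin S → Fin A₁ → ℝ := fun s a => if a = g s then 1 else 0 with hπ₁'def
  have hπ₁'pol : IsPolicy π₁' := by
    constructor
    · intro s a; by_cases h : a = g s <;> simp [hπ₁'def, h]
    · intro s; simp [hπ₁'def]
  -- the policy-evaluation operator of the greedy policy
  set T : (Fin S → ℝ) → (Fin S → ℝ) :=
    fun W s => C s (g s) + γ₁ * ∑ s' : Fin S, P s' s (g s) * W s' with hTdef
  have hTbound : ∀ V' W s, |T V' s - T W s| ≤ γ₁ * dist V' W := by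
    intro V' W s
    have : T V' s - T W s
        = γ₁ * ((∑ s' : Fin S, P s' s (g s) * V' s') - ∑ s' : Fin S, P s' s (g s) * W s') := by
      simp [hTdef]; ring
    rw [this, abs_mul, abs_of_nonneg hγ₁.1.le]
    exact mul_le_mul_of_nonneg_left
      (aux_kernel_bound _ (fun s' => hP0 s' s (g s)) (hP1 s (g s)) V' W) hγ₁.1.le
  have hTcon : ContractingWith ⟨γ₁, hγ₁.1.le⟩ T := aux_contracting hγ₁.1.le hγ₁.2 T hTbound
  set V' : Fin S → ℝ := ContractingWith.fixedPoint T hTcon with hV'def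
  have hV'fix : T V' = V' := hTcon.fixedPoint_isFixedPt
  -- V' is the stationary value of the greedy policy
  have hV'stat : IsStationaryValueOne P γ₁ D1 π₁' π₂ V' := by
    intro s
    have : (∑ a : Fin A₁, π₁' s a *
        (playerOneCost D1 π₂ s a + γ₁ * ∑ s' : Fin S, P s' s a * V' s')) = T V' s := by
      simp [hπ₁'def, hTdef, Finset.sum_ite_eq', ite_mul, hCdef]
    rw [this, hV'fix]
  -- Nash: V ≤ V'
  have hVleV' : V ≤ V' := hN1 π₁' hπ₁'pol V V' hV hV'stat
  -- V s is a π₁-average of Q s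
  have hVavg : ∀ s, V s = ∑ a : Fin A₁, π₁ s a * Q s a := fun s => hV s
  -- T V ≤ V
  have hTVle : ∀ s, T V s ≤ V s := by
    intro s
    have h1 : T V s = Q s (g s) := rfl
    have h2 : (∑ a : Fin A₁, π₁ s a * Q s (g s)) ≤ ∑ a : Fin A₁, π₁ s a * Q s a :=
      Finset.sum_le_sum fun a _ => mul_le_mul_of_nonneg_left (hgmin s a) (hπ₁.1 s a)
    rw [h1, hVavg s]
    calc Q s (g s) = (∑ a : Fin A₁, π₁ s a) * Q s (g s) := by rw [hπ₁.2 s, one_mul]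
      _ = ∑ a : Fin A₁, π₁ s a * Q s (g s) := by rw [Finset.sum_mul]
      _ ≤ _ := h2
  -- T is monotone
  have hTmono : ∀ W U : Fin S → ℝ, W ≤ U → T W ≤ T U := by
    intro W U hWU s
    have : (∑ s' : Fin S, P s' s (g s) * W s') ≤ ∑ s' : Fin S, P s' s (g s) * U s' :=
      Finset.sum_le_sum fun s' _ => mul_le_mul_of_nonneg_left (hWU s') (hP0 s' s (g s))
    exact add_le_add le_rfl (mul_le_mul_of_nonneg_left this hγ₁.1.le)
  -- iterates of T stay below V
  have hiter : ∀ n, T^[n] V ≤ V := by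
    intro n
    induction n with
    | zero => simp
    | succ n ih =>
        rw [Function.iterate_succ_apply']
        exact le_trans (hTmono _ _ ih) (fun s => hTVle s)
  -- V' ≤ V
  have hV'leV : V' ≤ V := by
    intro s
    have htend : Filter.Tendsto (fun n => T^[n] V s) Filter.atTop (nhds (V' s)) :=
      tendsto_pi_nhds.1 (hTcon.tendsto_iterate_fixedPoint V) s
    exact le_of_tendsto htend (Filter.Eventually.of_forall fun n => hiter n s)
  have hVeq : V = V' := le_antisymm hVleV' hV'leV
  -- the fixed point property of the single Bellman operator
  have hbell : bellman S A₁ P γ₁ C V = V := by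
    funext s
    have h1 : bellman S A₁ P γ₁ C V s = ⨅ a, Q s a := rfl
    have h2 : T V s = Q s (g s) := rfl
    calc bellman S A₁ P γ₁ C V s = Q s (g s) := by rw [h1, hg s]
      _ = T V s := h2.symm
      _ = T V' s := by rw [← hVeq]
      _ = V' s := by rw [hV'fix]
      _ = V s := by rw [← hVeq]
  refine ⟨hbell, ?_⟩
  -- Part 2: V ∈ Vstar
  have hCmem : C ∈ 𝒞 := h𝒞NE π₁ π₂ ⟨hπ₁, hπ₂, hN1, hN2⟩
  set G : (Fin S → ℝ) → (Fin S → ℝ) := bellman S A₁ P γ₁ C with hGdef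
  have hGbound : ∀ V₁ W s, |G V₁ s - G W s| ≤ γ₁ * dist V₁ W := by
    intro V₁ W s
    apply aux_inf_abs_sub
    intro a
    have : (C s a + γ₁ * ∑ s' : Fin S, P s' s a * V₁ s')
        - (C s a + γ₁ * ∑ s' : Fin S, P s' s a * W s')
        = γ₁ * ((∑ s' : Fin S, P s' s a * V₁ s') - ∑ s' : Fin S, P s' s a * W s') := by ring
    rw [this, abs_mul, abs_of_nonneg hγ₁.1.le]
    exact mul_le_mul_of_nonneg_left
      (aux_kernel_bound _ (fun s' => hP0 s' s a) (hP1 s a) V₁ W) hγ₁.1.le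
  have hGcon : ContractingWith ⟨γ₁, hγ₁.1.le⟩ G := aux_contracting hγ₁.1.le hγ₁.2 G hGbound
  obtain ⟨V₀, hV₀⟩ := hVne
  have hmem : ∀ n, G^[n] V₀ ∈ Vstar := by
    intro n
    induction n with
    | zero => simpa using hV₀
    | succ n ih =>
        rw [Function.iterate_succ_apply', ← hVfix]
        exact subset_closure (Set.mem_iUnion₂.2 ⟨C, hCmem,
          Set.mem_iUnion₂.2 ⟨G^[n] V₀, ih, rfl⟩⟩)
  have hfixV : V = ContractingWith.fixedPoint G hGcon :=
    hGcon.fixedPoint_unique hbell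
  have htend : Filter.Tendsto (fun n => G^[n] V₀) Filter.atTop (nhds V) := by
    rw [hfixV]
    exact hGcon.tendsto_iterate_fixedPoint V₀
  exact hVc.isClosed.mem_of_tendsto htend (Filter.Eventually.of_forall hmem)
end

section
/- (product formula used in Lemma 10) Let S be a positive natural number and for each i ∈ Fin S let X_i, Y_i be nonempty compact subsets of ℝ. Let X = {v ∈ ℝ^S : ∀ i, v i ∈ X_i} and Y = {v ∈ ℝ^S : ∀ i, v i ∈ Y_i}, where ℝ^S = (Fin S → ℝ) carries the sup norm. Then the Hausdorff distance satisfies d_H(X, Y) = max_{i ∈ Fin S} d_H(X_i, Y_i). -/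
open Metric

theorem hausdorffDist_pi (S : ℕ) (hS : 0 < S)
    (X Y : Fin S → Set ℝ)
    (hXne : ∀ i, (X i).Nonempty) (hXc : ∀ i, IsCompact (X i))
    (hYne : ∀ i, (Y i).Nonempty) (hYc : ∀ i, IsCompact (Y i)) :
    hausdorffDist {v : Fin S → ℝ | ∀ i, v i ∈ X i} {v : Fin S → ℝ | ∀ i, v i ∈ Y i} =
      ⨆ i : Fin S, hausdorffDist (X i) (Y i) := by
  haveI : Nonempty (Fin S) := ⟨⟨0, hS⟩⟩
  set PX : Set (Fin S → ℝ) := {v : Fin S → ℝ | ∀ i, v i ∈ X i}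
  set PY : Set (Fin S → ℝ) := {v : Fin S → ℝ | ∀ i, v i ∈ Y i}
  have hPX : PX = Set.pi Set.univ X := by ext v; simp [PX, Set.mem_pi]
  have hPY : PY = Set.pi Set.univ Y := by ext v; simp [PY, Set.mem_pi]
  have hPXc : IsCompact PX := hPX ▸ isCompact_univ_pi hXc
  have hPYc : IsCompact PY := hPY ▸ isCompact_univ_pi hYc
  have hPXne : PX.Nonempty := ⟨fun i => (hXne i).choose, fun i => (hXne i).choose_spec⟩
  have hPYne : PY.Nonempty := ⟨fun i => (hYne i).choose, fun i => (hYne i).choose_spec⟩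
  have hfin : ∀ i, EMetric.hausdorffEdist (X i) (Y i) ≠ ⊤ := fun i =>
    hausdorffEdist_ne_top_of_nonempty_of_bounded (hXne i) (hYne i)
      (hXc i).isBounded (hYc i).isBounded
  have hPfin : EMetric.hausdorffEdist PX PY ≠ ⊤ :=
    hausdorffEdist_ne_top_of_nonempty_of_bounded hPXne hPYne hPXc.isBounded hPYc.isBounded
  have hbdd : BddAbove (Set.range fun i : Fin S => hausdorffDist (X i) (Y i)) :=
    (Set.finite_range _).bddAbove
  have hDnonneg : 0 ≤ ⨆ i : Fin S, hausdorffDist (X i) (Y i) :=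
    le_trans hausdorffDist_nonneg (le_ciSup hbdd (Classical.arbitrary (Fin S)))
  apply le_antisymm
  · -- d_H(PX, PY) ≤ sup
    set D := ⨆ i : Fin S, hausdorffDist (X i) (Y i) with hD
    apply hausdorffDist_le_of_mem_dist hDnonneg
    · intro x hx
      have hchoice : ∀ i, ∃ y ∈ Y i, dist (x i) y ≤ D := by
        intro i
        obtain ⟨y, hy, hyd⟩ := (hYc i).exists_infDist_eq_dist (hYne i) (x i)
        refine ⟨y, hy, ?_⟩
        rw [← hyd]
        exact le_trans (infDist_le_hausdorffDist_of_mem (hx i) (hfin i))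
          (le_ciSup hbdd i)
      choose y hy hyd using hchoice
      exact ⟨y, hy, (dist_pi_le_iff hDnonneg).2 hyd⟩
    · intro y hy
      have hchoice : ∀ i, ∃ x ∈ X i, dist (y i) x ≤ D := by
        intro i
        obtain ⟨x, hx, hxd⟩ := (hXc i).exists_infDist_eq_dist (hXne i) (y i)
        refine ⟨x, hx, ?_⟩
        rw [← hxd]
        refine le_trans (infDist_le_hausdorffDist_of_mem (hy i) ?_)
          (le_trans (le_of_eq (hausdorffDist_comm ..)) (le_ciSup hbdd i))
        rw [EMetric.hausdorffEdist_comm]; exact hfin i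
      choose x hx hxd using hchoice
      exact ⟨x, hx, (dist_pi_le_iff hDnonneg).2 hxd⟩
  · -- sup ≤ d_H(PX, PY)
    apply ciSup_le
    intro i
    apply hausdorffDist_le_of_mem_dist hausdorffDist_nonneg
    · intro a ha
      set v : Fin S → ℝ := fun j => if h : j = i then a else (hXne j).choose with hv
      have hvPX : v ∈ PX := by
        intro j
        by_cases h : j = i
        · subst h; simpa [hv] using ha
        · simpa [hv, h] using (hXne j).choose_spec
      obtain ⟨w, hw, hwd⟩ := hPYc.exists_infDist_eq_dist hPYne v
      refine ⟨w i, hw i, ?_⟩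
      have h1 : dist (v i) (w i) ≤ dist v w := dist_le_pi_dist v w i
      have h2 : dist v w ≤ hausdorffDist PX PY := by
        rw [← hwd]
        exact infDist_le_hausdorffDist_of_mem hvPX hPfin
      calc dist a (w i) = dist (v i) (w i) := by simp [hv]
        _ ≤ _ := le_trans h1 h2
    · intro b hb
      set v : Fin S → ℝ := fun j => if h : j = i then b else (hYne j).choose with hv
      have hvPY : v ∈ PY := by
        intro j
        by_cases h : j = i
        · subst h; simpa [hv] using hb
        · simpa [hv, h] using (hYne j).choose_spec
      obtain ⟨w, hw, hwd⟩ := hPXc.exists_infDist_eq_dist hPXne v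
      refine ⟨w i, hw i, ?_⟩
      have h1 : dist (v i) (w i) ≤ dist v w := dist_le_pi_dist v w i
      have h2 : dist v w ≤ hausdorffDist PY PX := by
        rw [← hwd]
        refine infDist_le_hausdorffDist_of_mem hvPY ?_
        rw [EMetric.hausdorffEdist_comm]; exact hPfin
      calc dist b (w i) = dist (v i) (w i) := by simp [hv]
        _ ≤ _ := le_trans h1 (h2.trans_eq (hausdorffDist_comm ..))
end

section
/- (Lemma 10) Let S be a positive natural number and let x̲, x̄, y̲, ȳ ∈ ℝ^S = (Fin S → ℝ) satisfy x̲ ≤ x̄ and y̲ ≤ ȳ componentwise. Let 𝒳 = {x ∈ ℝ^S : x̲ ≤ x ≤ x̄ componentwise} and 𝒴 = {y ∈ ℝ^S : y̲ ≤ y ≤ ȳ componentwise}. Then, with ℝ^S equipped with the sup norm, the Hausdorff distance satisfies d_H(𝒳, 𝒴) = max(‖x̲ − y̲‖∞, ‖x̄ − ȳ‖∞). -/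
open Metric

lemma clamp_abs (a b c d t : ℝ) (hcd : c ≤ d) (h1 : a ≤ t) (h2 : t ≤ b) :
    |t - max c (min t d)| ≤ max |a - c| |b - d| := by
  rcases le_total t c with h | h
  · have hm : min t d ≤ c := le_trans (min_le_left _ _) h
    rw [max_eq_left hm, abs_of_nonpos (by linarith)]
    have := neg_le_abs (a - c)
    exact le_max_of_le_left (by linarith)
  · rcases le_total t d with h' | h'
    · rw [min_eq_left h', max_eq_right h, sub_self, abs_zero]
      exact le_max_of_le_left (abs_nonneg _)
    · rw [min_eq_right h', max_eq_right hcd, abs_of_nonneg (by linarith)]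
      have := le_abs_self (b - d)
      exact le_max_of_le_right (by linarith)

lemma infDist_coord_le {S : ℕ} (p : Fin S → ℝ) (s t : Set (Fin S → ℝ)) (i : Fin S) (r : ℝ)
    (hp : p ∈ s) (hne : EMetric.hausdorffEdist s t ≠ ⊤) (htne : t.Nonempty)
    (h : ∀ z ∈ t, r ≤ |p i - z i|) :
    r ≤ hausdorffDist s t := by
  refine le_trans ?_ (infDist_le_hausdorffDist_of_mem hp hne)
  by_contra hlt
  push_neg at hlt
  obtain ⟨z, hz, hd⟩ := (infDist_lt_iff htne).1 hlt
  have h1 : dist (p i) (z i) ≤ dist p z := dist_le_pi_dist p z i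
  rw [Real.dist_eq] at h1
  linarith [h z hz]

theorem hausdorffDist_box (S : ℕ) (hS : 0 < S)
    (xl xu yl yu : Fin S → ℝ) (hx : xl ≤ xu) (hy : yl ≤ yu) :
    hausdorffDist {x : Fin S → ℝ | xl ≤ x ∧ x ≤ xu} {y : Fin S → ℝ | yl ≤ y ∧ y ≤ yu} =
      max ‖xl - yl‖ ‖xu - yu‖ := by
  haveI : Nonempty (Fin S) := ⟨⟨0, hS⟩⟩
  have hXI : {x : Fin S → ℝ | xl ≤ x ∧ x ≤ xu} = Set.Icc xl xu := rfl
  have hYI : {y : Fin S → ℝ | yl ≤ y ∧ y ≤ yu} = Set.Icc yl yu := rfl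
  rw [hXI, hYI]
  have hXne : (Set.Icc xl xu).Nonempty := ⟨xl, le_refl _, hx⟩
  have hYne : (Set.Icc yl yu).Nonempty := ⟨yl, le_refl _, hy⟩
  have hne : EMetric.hausdorffEdist (Set.Icc xl xu) (Set.Icc yl yu) ≠ ⊤ :=
    hausdorffEdist_ne_top_of_nonempty_of_bounded hXne hYne
      isCompact_Icc.isBounded isCompact_Icc.isBounded
  have hne' : EMetric.hausdorffEdist (Set.Icc yl yu) (Set.Icc xl xu) ≠ ⊤ := by
    exact fun h => hne (by rw [← h]; exact EMetric.hausdorffEdist_comm)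
  have hr0 : (0:ℝ) ≤ max ‖xl - yl‖ ‖xu - yu‖ := le_max_of_le_left (norm_nonneg _)
  apply le_antisymm
  · apply hausdorffDist_le_of_mem_dist hr0
    · intro x hx'
      refine ⟨fun i => max (yl i) (min (x i) (yu i)), ⟨fun i => le_max_left _ _,
        fun i => max_le (hy i) (min_le_right _ _)⟩, ?_⟩
      rw [dist_pi_le_iff hr0]
      intro i
      rw [Real.dist_eq]
      calc |x i - max (yl i) (min (x i) (yu i))|
          ≤ max |xl i - yl i| |xu i - yu i| :=
            clamp_abs _ _ _ _ _ (hy i) (hx'.1 i) (hx'.2 i)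
        _ ≤ max ‖xl - yl‖ ‖xu - yu‖ := by
            apply max_le_max
            · simpa using norm_le_pi_norm (xl - yl) i
            · simpa using norm_le_pi_norm (xu - yu) i
    · intro y hy'
      refine ⟨fun i => max (xl i) (min (y i) (xu i)), ⟨fun i => le_max_left _ _,
        fun i => max_le (hx i) (min_le_right _ _)⟩, ?_⟩
      rw [dist_pi_le_iff hr0]
      intro i
      rw [Real.dist_eq]
      calc |y i - max (xl i) (min (y i) (xu i))|
          ≤ max |yl i - xl i| |yu i - xu i| :=
            clamp_abs _ _ _ _ _ (hx i) (hy'.1 i) (hy'.2 i)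
        _ ≤ max ‖xl - yl‖ ‖xu - yu‖ := by
            apply max_le_max
            · rw [abs_sub_comm]; simpa using norm_le_pi_norm (xl - yl) i
            · rw [abs_sub_comm]; simpa using norm_le_pi_norm (xu - yu) i
  · apply max_le
    · rw [pi_norm_le_iff_of_nonneg hausdorffDist_nonneg]
      intro i
      simp only [Pi.sub_apply, Real.norm_eq_abs]
      rcases le_total (xl i) (yl i) with h | h
      · rw [abs_of_nonpos (by linarith)]
        exact infDist_coord_le xl _ _ i _ ⟨le_refl _, hx⟩ hne hYne
          (fun z hz => by
            have h1 : yl i ≤ z i := hz.1 i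
            have := neg_le_abs (xl i - z i)
            linarith)
      · rw [abs_of_nonneg (by linarith)]
        rw [hausdorffDist_comm]
        exact infDist_coord_le yl _ _ i _ ⟨le_refl _, hy⟩ hne' hXne
          (fun z hz => by
            have h1 : xl i ≤ z i := hz.1 i
            have := neg_le_abs (yl i - z i)
            linarith)
    · rw [pi_norm_le_iff_of_nonneg hausdorffDist_nonneg]
      intro i
      simp only [Pi.sub_apply, Real.norm_eq_abs]
      rcases le_total (xu i) (yu i) with h | h
      · rw [abs_of_nonpos (by linarith)]
        rw [hausdorffDist_comm]
        exact infDist_coord_le yu _ _ i _ ⟨hy, le_refl _⟩ hne' hXne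
          (fun z hz => by
            have h1 : z i ≤ xu i := hz.2 i
            have := le_abs_self (yu i - z i)
            linarith)
      · rw [abs_of_nonneg (by linarith)]
        exact infDist_coord_le xu _ _ i _ ⟨hx, le_refl _⟩ hne hYne
          (fun z hz => by
            have h1 : z i ≤ yu i := hz.2 i
            have := le_abs_self (xu i - z i)
            linarith)
end

section
/- (Proposition 12, stopping criterion for interval set-based value iteration) Let C̲, C̄ be cost matrices with C̲ s a ≤ C̄ s a for all s, a, let 𝒞 = {C : C̲ s a ≤ C s a ≤ C̄ s a for all s, a}, and let 𝒱* be the unique nonempty compact fixed point set of F_𝒞. Starting from any box 𝒱⁰ = {V : V̲⁰ ≤ V ≤ V̄⁰ componentwise} with V̲⁰ ≤ V̄⁰, define the iterates 𝒱^{k+1} = F_𝒞(𝒱^k). Then d_H(𝒱^k, 𝒱*) → 0 as k → ∞; moreover, for every ε > 0 and every k ≥ 1, if d_H(𝒱^{k+1}, 𝒱^k) < ε (1 − γ)/(2γ) then d_H(𝒱^{k+1}, 𝒱*) ≤ ε/2. -/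
open Metric

lemma abs_iInf_sub_iInf_le {A : ℕ} (hA : 0 < A) (φ ψ : Fin A → ℝ) (b : ℝ)
    (h : ∀ a, |φ a - ψ a| ≤ b) : |(⨅ a, φ a) - ⨅ a, ψ a| ≤ b := by
  haveI : Nonempty (Fin A) := ⟨⟨0, hA⟩⟩
  have bddφ : BddBelow (Set.range φ) := (Set.finite_range φ).bddBelow
  have bddψ : BddBelow (Set.range ψ) := (Set.finite_range ψ).bddBelow
  have k1 : (⨅ a, φ a) - b ≤ ⨅ a, ψ a :=
    le_ciInf fun a => by
      have h1 := ciInf_le bddφ a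
      have h2 := abs_le.1 (h a)
      linarith [h2.1, h2.2]
  have k2 : (⨅ a, ψ a) - b ≤ ⨅ a, φ a :=
    le_ciInf fun a => by
      have h1 := ciInf_le bddψ a
      have h2 := abs_le.1 (h a)
      linarith [h2.1, h2.2]
  rw [abs_sub_le_iff]
  constructor <;> linarith

lemma bellman_dist_le (S A : ℕ) (hS : 0 < S) (hA : 0 < A)
    (P : Fin S → Fin S → Fin A → ℝ)
    (hP0 : ∀ s' s a, 0 ≤ P s' s a)
    (hP1 : ∀ s a, ∑ s' : Fin S, P s' s a = 1)
    (γ : ℝ) (hγ0 : 0 ≤ γ) (C C' : Fin S → Fin A → ℝ) (V V' : Fin S → ℝ) :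
    dist (bellman S A P γ C V) (bellman S A P γ C' V') ≤ dist C C' + γ * dist V V' := by
  have hb : (0:ℝ) ≤ dist C C' + γ * dist V V' := by positivity
  rw [dist_pi_le_iff hb]
  intro s
  rw [Real.dist_eq]
  apply abs_iInf_sub_iInf_le hA
  intro a
  have hCC : |C s a - C' s a| ≤ dist C C' := by
    rw [← Real.dist_eq]
    exact (dist_le_pi_dist (C s) (C' s) a).trans (dist_le_pi_dist C C' s)
  have hsum : |∑ s' : Fin S, P s' s a * V s' - ∑ s' : Fin S, P s' s a * V' s'| ≤ dist V V' := by
    rw [← Finset.sum_sub_distrib]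
    calc |∑ s' : Fin S, (P s' s a * V s' - P s' s a * V' s')|
        ≤ ∑ s' : Fin S, |P s' s a * V s' - P s' s a * V' s'| := Finset.abs_sum_le_sum_abs _ _
      _ ≤ ∑ s' : Fin S, P s' s a * dist V V' := by
          apply Finset.sum_le_sum
          intro s' _
          rw [← mul_sub, abs_mul, abs_of_nonneg (hP0 s' s a)]
          refine mul_le_mul_of_nonneg_left ?_ (hP0 s' s a)
          rw [← Real.dist_eq]
          exact dist_le_pi_dist V V' s'
      _ = dist V V' := by rw [← Finset.sum_mul, hP1 s a, one_mul]
  calc |(C s a + γ * ∑ s' : Fin S, P s' s a * V s') -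
        (C' s a + γ * ∑ s' : Fin S, P s' s a * V' s')|
      = |(C s a - C' s a) + γ * (∑ s' : Fin S, P s' s a * V s' -
          ∑ s' : Fin S, P s' s a * V' s')| := by ring_nf
    _ ≤ |C s a - C' s a| + |γ * (∑ s' : Fin S, P s' s a * V s' -
          ∑ s' : Fin S, P s' s a * V' s')| := abs_add_le _ _
    _ ≤ dist C C' + γ * dist V V' := by
        rw [abs_mul, abs_of_nonneg hγ0]
        exact add_le_add hCC (mul_le_mul_of_nonneg_left hsum hγ0)

theorem setBellman_interval_stopping_criterion (S A : ℕ) (hS : 0 < S) (hA : 0 < A)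
    (P : Fin S → Fin S → Fin A → ℝ)
    (hP0 : ∀ s' s a, 0 ≤ P s' s a)
    (hP1 : ∀ s a, ∑ s' : Fin S, P s' s a = 1)
    (γ : ℝ) (hγ : γ ∈ Set.Ioo (0 : ℝ) 1)
    (Cl Cu : Fin S → Fin A → ℝ) (hC : ∀ s a, Cl s a ≤ Cu s a)
    (Vstar : Set (Fin S → ℝ)) (hVne : Vstar.Nonempty) (hVc : IsCompact Vstar)
    (hVfix : setBellman S A P γ {C | ∀ s a, Cl s a ≤ C s a ∧ C s a ≤ Cu s a} Vstar = Vstar)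
    (Vl0 Vu0 : Fin S → ℝ) (hV0 : Vl0 ≤ Vu0)
    (Vseq : ℕ → Set (Fin S → ℝ))
    (hVseq0 : Vseq 0 = {V : Fin S → ℝ | Vl0 ≤ V ∧ V ≤ Vu0})
    (hVseq : ∀ k, Vseq (k + 1) =
      setBellman S A P γ {C | ∀ s a, Cl s a ≤ C s a ∧ C s a ≤ Cu s a} (Vseq k)) :
    Filter.Tendsto (fun k => hausdorffDist (Vseq k) Vstar) Filter.atTop (nhds 0) ∧
    ∀ ε : ℝ, 0 < ε → ∀ k : ℕ, 1 ≤ k →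
      hausdorffDist (Vseq (k + 1)) (Vseq k) < ε * (1 - γ) / (2 * γ) →
      hausdorffDist (Vseq (k + 1)) Vstar ≤ ε / 2 := by
  obtain ⟨hγ0, hγ1⟩ := hγ
  set Cset : Set (Fin S → Fin A → ℝ) := {C | ∀ s a, Cl s a ≤ C s a ∧ C s a ≤ Cu s a} with hCset
  have hClmem : Cl ∈ Cset := fun s a => ⟨le_refl _, hC s a⟩
  have hCsetb : Bornology.IsBounded Cset := by
    have : Cset ⊆ Set.Icc Cl Cu := by
      intro C hC'
      constructor <;> intro s <;> intro a
      · exact (hC' s a).1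
      · exact (hC' s a).2
    exact (isCompact_Icc.isBounded).subset this
  obtain ⟨rC, hrC⟩ := hCsetb.subset_closedBall Cl
  -- nonemptiness and boundedness of setBellman images
  have hF : ∀ 𝒱 : Set (Fin S → ℝ), 𝒱.Nonempty → Bornology.IsBounded 𝒱 →
      (setBellman S A P γ Cset 𝒱).Nonempty ∧ Bornology.IsBounded (setBellman S A P γ Cset 𝒱) := by
    intro 𝒱 ⟨V0, hV0'⟩ hb
    obtain ⟨r, hr⟩ := hb.subset_closedBall V0
    constructor
    · exact ⟨bellman S A P γ Cl V0, subset_closure (by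
        simp only [Set.mem_iUnion]
        exact ⟨Cl, hClmem, V0, hV0', rfl⟩)⟩
    · apply Bornology.IsBounded.closure
      apply (isBounded_closedBall (x := bellman S A P γ Cl V0) (r := rC + γ * r)).subset
      intro x hx
      simp only [Set.mem_iUnion] at hx
      obtain ⟨C, hCm, V, hVm, rfl⟩ := hx
      have h1 := bellman_dist_le S A hS hA P hP0 hP1 γ (le_of_lt hγ0) C Cl V V0
      have h2 : dist C Cl ≤ rC := hrC hCm
      have h3 : dist V V0 ≤ r := hr hVm
      simp only [Set.mem_singleton_iff, mem_closedBall]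
      nlinarith
  have hVsNB : ∀ k, (Vseq k).Nonempty ∧ Bornology.IsBounded (Vseq k) := by
    intro k
    induction k with
    | zero =>
      rw [hVseq0]
      constructor
      · exact ⟨Vl0, le_refl _, hV0⟩
      · have : {V : Fin S → ℝ | Vl0 ≤ V ∧ V ≤ Vu0} = Set.Icc Vl0 Vu0 := rfl
        rw [this]
        exact isCompact_Icc.isBounded
    | succ k ih =>
      rw [hVseq k]
      exact hF _ ih.1 ih.2
  have hVstarNB : Vstar.Nonempty ∧ Bornology.IsBounded Vstar := ⟨hVne, hVc.isBounded⟩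
  have hfin : ∀ s t : Set (Fin S → ℝ), s.Nonempty → Bornology.IsBounded s → t.Nonempty →
      Bornology.IsBounded t → EMetric.hausdorffEdist s t ≠ ⊤ := fun s t h1 h2 h3 h4 =>
    hausdorffEdist_ne_top_of_nonempty_of_bounded h1 h3 h2 h4
  -- contraction property
  have hcontr : ∀ s t : Set (Fin S → ℝ), s.Nonempty → Bornology.IsBounded s → t.Nonempty →
      Bornology.IsBounded t →
      hausdorffDist (setBellman S A P γ Cset s) (setBellman S A P γ Cset t) ≤
        γ * hausdorffDist s t := by
    intro s t hsn hsb htn htb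
    have key : ∀ r : ℝ, hausdorffDist s t < r →
        hausdorffDist (setBellman S A P γ Cset s) (setBellman S A P γ Cset t) ≤ γ * r := by
      intro r hrlt
      have hr0 : 0 ≤ r := hausdorffDist_nonneg.trans (le_of_lt hrlt)
      unfold setBellman
      rw [hausdorffDist_closure]
      apply hausdorffDist_le_of_mem_dist (by positivity)
      · intro x hx
        simp only [Set.mem_iUnion] at hx
        obtain ⟨C, hCm, V, hVm, rfl⟩ := hx
        obtain ⟨V', hV'm, hdV⟩ := exists_dist_lt_of_hausdorffDist_lt hVm hrlt
          (hfin s t hsn hsb htn htb)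
        refine ⟨bellman S A P γ C V', ?_, ?_⟩
        · simp only [Set.mem_iUnion]
          exact ⟨C, hCm, V', hV'm, rfl⟩
        · have := bellman_dist_le S A hS hA P hP0 hP1 γ (le_of_lt hγ0) C C V V'
          simp only [dist_self, zero_add] at this
          exact this.trans (mul_le_mul_of_nonneg_left hdV.le hγ0.le)
      · intro y hy
        simp only [Set.mem_iUnion] at hy
        obtain ⟨C, hCm, V, hVm, rfl⟩ := hy
        obtain ⟨V', hV'm, hdV⟩ := exists_dist_lt_of_hausdorffDist_lt' hVm hrlt
          (hfin s t hsn hsb htn htb)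
        refine ⟨bellman S A P γ C V', ?_, ?_⟩
        · simp only [Set.mem_iUnion]
          exact ⟨C, hCm, V', hV'm, rfl⟩
        · rw [dist_comm]
          have := bellman_dist_le S A hS hA P hP0 hP1 γ (le_of_lt hγ0) C C V' V
          simp only [dist_self, zero_add] at this
          exact this.trans (mul_le_mul_of_nonneg_left hdV.le hγ0.le)
    apply le_of_forall_pos_le_add
    intro ε hε
    have hpos : 0 < ε / γ := by positivity
    have h := key (hausdorffDist s t + ε / γ) (by linarith)
    calc hausdorffDist (setBellman S A P γ Cset s) (setBellman S A P γ Cset t)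
        ≤ γ * (hausdorffDist s t + ε / γ) := h
      _ = γ * hausdorffDist s t + ε := by field_simp
  -- step contraction towards Vstar
  have hstep : ∀ k, hausdorffDist (Vseq (k + 1)) Vstar ≤ γ * hausdorffDist (Vseq k) Vstar := by
    intro k
    have := hcontr (Vseq k) Vstar (hVsNB k).1 (hVsNB k).2 hVne hVc.isBounded
    rwa [hVfix, ← hVseq k] at this
  have hgeom : ∀ k, hausdorffDist (Vseq k) Vstar ≤ γ ^ k * hausdorffDist (Vseq 0) Vstar := by
    intro k
    induction k with
    | zero => simp
    | succ k ih =>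
      calc hausdorffDist (Vseq (k + 1)) Vstar ≤ γ * hausdorffDist (Vseq k) Vstar := hstep k
        _ ≤ γ * (γ ^ k * hausdorffDist (Vseq 0) Vstar) :=
            mul_le_mul_of_nonneg_left ih (le_of_lt hγ0)
        _ = γ ^ (k + 1) * hausdorffDist (Vseq 0) Vstar := by ring
  constructor
  · apply squeeze_zero (fun k => hausdorffDist_nonneg) hgeom
    have h1 : Filter.Tendsto (fun k : ℕ => γ ^ k) Filter.atTop (nhds 0) :=
      tendsto_pow_atTop_nhds_zero_of_lt_one (le_of_lt hγ0) hγ1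
    have := h1.mul_const (hausdorffDist (Vseq 0) Vstar)
    rwa [zero_mul] at this
  · intro ε hε k hk hlt
    have hD := hstep k
    have htri : hausdorffDist (Vseq k) Vstar ≤
        hausdorffDist (Vseq k) (Vseq (k + 1)) + hausdorffDist (Vseq (k + 1)) Vstar :=
      hausdorffDist_triangle (hfin _ _ (hVsNB k).1 (hVsNB k).2 (hVsNB (k+1)).1 (hVsNB (k+1)).2)
    have hcomm : hausdorffDist (Vseq (k + 1)) (Vseq k) = hausdorffDist (Vseq k) (Vseq (k + 1)) :=
      hausdorffDist_comm
    have hγ1' : 0 < 1 - γ := by linarith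
    set D := hausdorffDist (Vseq (k + 1)) Vstar with hDdef
    have h1 : (1 - γ) * D ≤ γ * hausdorffDist (Vseq (k + 1)) (Vseq k) := by nlinarith
    have h2 : γ * hausdorffDist (Vseq (k + 1)) (Vseq k) < γ * (ε * (1 - γ) / (2 * γ)) :=
      mul_lt_mul_of_pos_left hlt hγ0
    have h3 : γ * (ε * (1 - γ) / (2 * γ)) = (1 - γ) * (ε / 2) := by
      field_simp
    have h4 : (1 - γ) * D < (1 - γ) * (ε / 2) := by rw [h3] at h2; linarith
    exact (lt_of_mul_lt_mul_left h4 hγ1'.le).le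
end
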